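/- If F ∈ 𝓙 then F̄ is weakly asymptotically equivalent to the tail of its n-fold convolution F^{n*} for every n ≥ 1 (0 < liminf F̄(x)/F̄^{n*}(x) ≤ limsup F̄(x)/F̄^{n*}(x) < ∞), and consequently F^{n*} ∈ 𝓙. -/

import Mathlib

open MeasureTheory Filter Set
open scoped ENNReal NNReal

/-- Tail of a distribution: `F̄(x) = μ(x, ∞)`. -/
noncomputable def tail (μ : Measure ℝ) (x : ℝ) : ℝ := (μ (Set.Ioi x)).toReal

/-- Conditional probability `P(A | X₁ + X₂ > x)` for two i.i.d. variables with law `μ`. -/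
noncomputable def condPair (μ : Measure ℝ) (A : Set (ℝ × ℝ)) (x : ℝ) : ℝ :=
  ((μ.prod μ) (A ∩ {p | x < p.1 + p.2})).toReal / ((μ.prod μ) {p | x < p.1 + p.2}).toReal

/-- The class 𝓙 : `lim_{K→∞} liminf_{x→∞} P(max(X₁,X₂) > x − K | X₁ + X₂ > x) = 1`. -/
def MemJ (μ : Measure ℝ) : Prop :=
  Tendsto (fun K : ℝ =>
      liminf (fun x : ℝ => condPair μ {p | x - K < max p.1 p.2} x) atTop)
    atTop (nhds 1)

/-- The class 𝓙 (equivalent form): for every nonnegative, unbounded, nondecreasing `g`,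
`lim_{x→∞} P(min(X₁,X₂) > g(x) | X₁ + X₂ > x) = 0`. -/
def MemJg (μ : Measure ℝ) : Prop :=
  ∀ g : ℝ → ℝ, (∀ x, 0 ≤ g x) → Monotone g → (∀ M, ∃ x, M < g x) →
    Tendsto (fun x : ℝ => condPair μ {p | g x < min p.1 p.2} x) atTop (nhds 0)

/-- Tail of the two-fold convolution: `F̄²*(x) = P(X₁ + X₂ > x)`. -/
noncomputable def tail2 (μ : Measure ℝ) (x : ℝ) : ℝ := ((μ.prod μ) {p | x < p.1 + p.2}).toReal

/-- Weak asymptotic tail-equivalence `F̄ ≍ Ḡ`: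
`0 < liminf F̄(x)/Ḡ(x) ≤ limsup F̄(x)/Ḡ(x) < ∞`. -/
def WeakTailEquiv (μ ν : Measure ℝ) : Prop :=
  (∃ c : ℝ, 0 < c ∧ ∀ᶠ x in atTop, c * tail ν x ≤ tail μ x) ∧
  (∃ C : ℝ, ∀ᶠ x in atTop, tail μ x ≤ C * tail ν x)

/-- Convolution of two laws on ℝ. -/
noncomputable def conv (μ ν : Measure ℝ) : Measure ℝ :=
  Measure.map (fun p : ℝ × ℝ => p.1 + p.2) (μ.prod ν)

/-- `n`-fold convolution `F^{n*}`. -/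
noncomputable def nconv (μ : Measure ℝ) : ℕ → Measure ℝ
  | 0 => Measure.dirac 0
  | n + 1 => conv (nconv μ n) μ

/-! Auxiliary definitions -/

noncomputable def TT (μ : Measure ℝ) (x : ℝ) : ℝ≥0∞ := μ (Set.Ioi x)

def SS (x : ℝ) : Set (ℝ × ℝ) := {p | x < p.1 + p.2}

noncomputable def PP (μ : Measure ℝ) (x : ℝ) : ℝ≥0∞ := (μ.prod μ) (SS x)

noncomputable def NB (μ : Measure ℝ) (x K : ℝ) : ℝ≥0∞ :=
  (μ.prod μ) ({p : ℝ × ℝ | max p.1 p.2 ≤ x - K} ∩ SS x)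

lemma measurable_TT (μ : Measure ℝ) : Measurable (TT μ) :=
  Antitone.measurable (fun _ _ h => measure_mono (Ioi_subset_Ioi h))

lemma mSS (x : ℝ) : MeasurableSet (SS x) :=
  measurableSet_lt measurable_const (measurable_fst.add measurable_snd)

lemma mMax (a : ℝ) : MeasurableSet {p : ℝ × ℝ | a < max p.1 p.2} :=
  measurableSet_lt measurable_const (measurable_fst.max measurable_snd)

lemma madd : Measurable (fun p : ℝ × ℝ => p.1 + p.2) := measurable_fst.add measurable_snd

lemma tail_conv (ν ρ : Measure ℝ) [SFinite ρ] (x : ℝ) :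
    conv ν ρ (Set.Ioi x) = ∫⁻ a, ρ (Set.Ioi (x - a)) ∂ν := by
  rw [conv, Measure.map_apply madd measurableSet_Ioi, Measure.prod_apply (madd measurableSet_Ioi)]
  refine lintegral_congr fun a => ?_
  congr 1
  ext b
  simp only [mem_preimage, mem_Ioi, sub_lt_iff_lt_add']

lemma conv_comm (ν ρ : Measure ℝ) [SFinite ν] [SFinite ρ] : conv ν ρ = conv ρ ν := by
  rw [conv, conv, ← Measure.prod_swap, Measure.map_map madd measurable_swap]
  have : ((fun p : ℝ × ℝ => p.1 + p.2) ∘ Prod.swap) = fun p : ℝ × ℝ => p.1 + p.2 := by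
    ext p; exact add_comm _ _
  rw [this]

lemma isProb_conv (ν ρ : Measure ℝ) [IsProbabilityMeasure ν] [IsProbabilityMeasure ρ] :
    IsProbabilityMeasure (conv ν ρ) := by
  constructor
  rw [conv, Measure.map_apply madd MeasurableSet.univ]
  simp

instance nconv_prob (μ : Measure ℝ) [IsProbabilityMeasure μ] (n : ℕ) :
    IsProbabilityMeasure (nconv μ n) := by
  induction n with
  | zero => exact Measure.dirac.isProbabilityMeasure
  | succ n ih => exact isProb_conv _ _

lemma nconv_one (μ : Measure ℝ) [IsProbabilityMeasure μ] : nconv μ 1 = μ := by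
  show conv (Measure.dirac 0) μ = μ
  rw [conv, Measure.dirac_prod, Measure.map_map madd (measurable_prodMk_left)]
  have : ((fun p : ℝ × ℝ => p.1 + p.2) ∘ Prod.mk (0 : ℝ)) = id := by
    ext b; simp
  rw [this, Measure.map_id]

lemma nconv_Iio (μ : Measure ℝ) [IsProbabilityMeasure μ] (hnn : μ (Set.Iio 0) = 0) :
    ∀ n, nconv μ n (Set.Iio 0) = 0 := by
  intro n
  induction n with
  | zero =>
    show Measure.dirac (0:ℝ) (Set.Iio 0) = 0
    rw [Measure.dirac_apply' _ measurableSet_Iio]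
    simp
  | succ n ih =>
    show conv (nconv μ n) μ (Set.Iio 0) = 0
    rw [conv, Measure.map_apply madd measurableSet_Iio,
      Measure.prod_apply (madd measurableSet_Iio)]
    have hae : ∀ᵐ a ∂(nconv μ n), (0:ℝ) ≤ a := by
      rw [ae_iff]
      have : {a : ℝ | ¬ (0:ℝ) ≤ a} = Set.Iio 0 := by ext a; simp
      rw [this]; exact ih
    have : (fun a => μ (Prod.mk a ⁻¹' ((fun p : ℝ × ℝ => p.1 + p.2) ⁻¹' Set.Iio 0)))
        =ᵐ[nconv μ n] 0 := by
      filter_upwards [hae] with a ha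
      have hsub : (Prod.mk a ⁻¹' ((fun p : ℝ × ℝ => p.1 + p.2) ⁻¹' Set.Iio 0)) ⊆ Set.Iio 0 := by
        intro b hb
        simp only [mem_preimage, mem_Iio] at hb ⊢
        linarith
      exact measure_mono_null hsub hnn
    rw [lintegral_congr_ae this]; simp

lemma nconv_Ici (μ : Measure ℝ) [IsProbabilityMeasure μ] (hnn : μ (Set.Iio 0) = 0) (n : ℕ) :
    nconv μ n (Set.Ici 0) = 1 := by
  have := prob_compl_eq_one_sub (μ := nconv μ n) (measurableSet_Iio (a := (0:ℝ)))
  rw [compl_Iio] at this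
  rw [this, nconv_Iio μ hnn n]; simp

lemma le_tail_nconv (μ : Measure ℝ) [IsProbabilityMeasure μ] (hnn : μ (Set.Iio 0) = 0)
    {n : ℕ} (hn : 1 ≤ n) (x : ℝ) : μ (Set.Ioi x) ≤ nconv μ n (Set.Ioi x) := by
  obtain ⟨m, rfl⟩ : ∃ m, n = m + 1 := ⟨n - 1, (Nat.succ_pred_eq_of_pos hn).symm⟩
  have : nconv μ (m+1) = conv (nconv μ m) μ := rfl
  rw [this, tail_conv]
  have hae : ∀ᵐ a ∂(nconv μ m), (0:ℝ) ≤ a := by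
    rw [ae_iff]
    have : {a : ℝ | ¬ (0:ℝ) ≤ a} = Set.Iio 0 := by ext a; simp
    rw [this]; exact nconv_Iio μ hnn m
  calc μ (Set.Ioi x) = ∫⁻ _, μ (Set.Ioi x) ∂(nconv μ m) := by
        rw [lintegral_const, measure_univ, mul_one]
    _ ≤ ∫⁻ a, μ (Set.Ioi (x - a)) ∂(nconv μ m) := by
        refine lintegral_mono_ae ?_
        filter_upwards [hae] with a ha
        exact measure_mono (Ioi_subset_Ioi (by linarith))

/-! Chunk 2 : condPair manipulation -/

lemma PP_le_one (ρ : Measure ℝ) [IsProbabilityMeasure ρ] (x : ℝ) : PP ρ x ≤ 1 :=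
  prob_le_one

lemma PP_ne_top (ρ : Measure ℝ) [IsProbabilityMeasure ρ] (x : ℝ) : PP ρ x ≠ ⊤ :=
  (lt_of_le_of_lt (PP_le_one ρ x) (by norm_num)).ne

lemma TT_le_PP (ρ : Measure ℝ) [IsProbabilityMeasure ρ] (h1 : ρ (Set.Ici 0) = 1) (x : ℝ) :
    TT ρ x ≤ PP ρ x := by
  have hsub : Set.Ioi x ×ˢ Set.Ici (0:ℝ) ⊆ SS x := by
    rintro ⟨a, b⟩ ⟨ha, hb⟩
    simp only [mem_Ioi, mem_Ici] at ha hb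
    show x < a + b
    linarith
  calc TT ρ x = ρ (Set.Ioi x) * ρ (Set.Ici 0) := by rw [h1, mul_one]; rfl
    _ = (ρ.prod ρ) (Set.Ioi x ×ˢ Set.Ici (0:ℝ)) := (Measure.prod_prod _ _).symm
    _ ≤ PP ρ x := measure_mono hsub

/-- decomposition of the conditioning event -/
lemma split_SS (ρ : Measure ℝ) (x K : ℝ) :
    (ρ.prod ρ) ({p : ℝ × ℝ | x - K < max p.1 p.2} ∩ SS x) + NB ρ x K = PP ρ x := by
  have h := measure_inter_add_diff (μ := ρ.prod ρ) (SS x) (mMax (x - K))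
  have h1 : SS x ∩ {p : ℝ × ℝ | x - K < max p.1 p.2}
      = {p : ℝ × ℝ | x - K < max p.1 p.2} ∩ SS x := inter_comm _ _
  have h2 : SS x \ {p : ℝ × ℝ | x - K < max p.1 p.2}
      = {p : ℝ × ℝ | max p.1 p.2 ≤ x - K} ∩ SS x := by
    ext p
    simp only [mem_diff, mem_inter_iff, mem_setOf_eq, not_lt]
    tauto
  rw [h1, h2] at h
  exact h

lemma condPair_le_one (ρ : Measure ℝ) [IsProbabilityMeasure ρ] (A : Set (ℝ × ℝ)) (x : ℝ) :
    condPair ρ A x ≤ 1 := by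
  rw [condPair]
  rcases eq_or_lt_of_le (ENNReal.toReal_nonneg (a := (ρ.prod ρ) {p : ℝ × ℝ | x < p.1 + p.2})) with h | h
  · rw [← h]; simp
  · rw [div_le_one h]
    exact ENNReal.toReal_mono (by
      exact (lt_of_le_of_lt (prob_le_one (μ := ρ.prod ρ) (s := _)) (by norm_num)).ne)
      (measure_mono inter_subset_right)

lemma condPair_nonneg (ρ : Measure ℝ) (A : Set (ℝ × ℝ)) (x : ℝ) : 0 ≤ condPair ρ A x :=
  div_nonneg ENNReal.toReal_nonneg ENNReal.toReal_nonneg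

lemma NB_le_of_condPair_gt (ρ : Measure ℝ) [IsProbabilityMeasure ρ] {x K ε : ℝ}
    (hpos : 0 < PP ρ x)
    (h : 1 - ε < condPair ρ {p : ℝ × ℝ | x - K < max p.1 p.2} x) :
    NB ρ x K ≤ ENNReal.ofReal ε * PP ρ x := by
  have hDfin : PP ρ x ≠ ⊤ := PP_ne_top ρ x
  have hDpos : 0 < (PP ρ x).toReal := ENNReal.toReal_pos hpos.ne' hDfin
  set N := (ρ.prod ρ) ({p : ℝ × ℝ | x - K < max p.1 p.2} ∩ SS x) with hN
  have hsplit := split_SS ρ x K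
  rw [← hN] at hsplit
  have hNfin : N ≠ ⊤ := ne_top_of_le_ne_top hDfin (hsplit ▸ le_self_add)
  have hBfin : NB ρ x K ≠ ⊤ := ne_top_of_le_ne_top hDfin (hsplit ▸ le_add_self)
  have hcond : condPair ρ {p : ℝ × ℝ | x - K < max p.1 p.2} x = N.toReal / (PP ρ x).toReal := rfl
  rw [hcond] at h
  have hNlow : (1 - ε) * (PP ρ x).toReal < N.toReal := (lt_div_iff₀ hDpos).mp h
  have htoR : N.toReal + (NB ρ x K).toReal = (PP ρ x).toReal := by
    rw [← ENNReal.toReal_add hNfin hBfin, hsplit]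
  have hBR : (NB ρ x K).toReal ≤ ε * (PP ρ x).toReal := by nlinarith
  calc NB ρ x K = ENNReal.ofReal (NB ρ x K).toReal := (ENNReal.ofReal_toReal hBfin).symm
    _ ≤ ENNReal.ofReal (ε * (PP ρ x).toReal) := ENNReal.ofReal_le_ofReal hBR
    _ = ENNReal.ofReal ε * ENNReal.ofReal (PP ρ x).toReal := by
        rcases le_or_gt ε 0 with hε | hε
        · rw [ENNReal.ofReal_eq_zero.mpr hε, zero_mul, ENNReal.ofReal_eq_zero.mpr]
          nlinarith
        · exact ENNReal.ofReal_mul hε.le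
    _ = ENNReal.ofReal ε * PP ρ x := by rw [ENNReal.ofReal_toReal hDfin]

lemma condPair_ge_of_NB_le (ρ : Measure ℝ) [IsProbabilityMeasure ρ] {x K δ : ℝ}
    (hδ : 0 ≤ δ) (hpos : 0 < PP ρ x)
    (h : NB ρ x K ≤ ENNReal.ofReal δ * PP ρ x) :
    1 - δ ≤ condPair ρ {p : ℝ × ℝ | x - K < max p.1 p.2} x := by
  have hDfin : PP ρ x ≠ ⊤ := PP_ne_top ρ x
  have hDpos : 0 < (PP ρ x).toReal := ENNReal.toReal_pos hpos.ne' hDfin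
  set N := (ρ.prod ρ) ({p : ℝ × ℝ | x - K < max p.1 p.2} ∩ SS x) with hN
  have hsplit := split_SS ρ x K
  rw [← hN] at hsplit
  have hNfin : N ≠ ⊤ := ne_top_of_le_ne_top hDfin (hsplit ▸ le_self_add)
  have hBfin : NB ρ x K ≠ ⊤ := ne_top_of_le_ne_top hDfin (hsplit ▸ le_add_self)
  have htoR : N.toReal + (NB ρ x K).toReal = (PP ρ x).toReal := by
    rw [← ENNReal.toReal_add hNfin hBfin, hsplit]
  have hBR : (NB ρ x K).toReal ≤ δ * (PP ρ x).toReal := by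
    have := ENNReal.toReal_mono (by
      exact ENNReal.mul_ne_top ENNReal.ofReal_ne_top hDfin) h
    rwa [ENNReal.toReal_mul, ENNReal.toReal_ofReal hδ] at this
  have hcond : condPair ρ {p : ℝ × ℝ | x - K < max p.1 p.2} x = N.toReal / (PP ρ x).toReal := rfl
  rw [hcond, le_div_iff₀ hDpos]
  nlinarith

/-- Extraction from `MemJ`. -/
lemma Jsmall (μ : Measure ℝ) [IsProbabilityMeasure μ] (hub : ∀ x : ℝ, 0 < μ (Set.Ioi x))
    (h1 : μ (Set.Ici 0) = 1) (hJ : MemJ μ) (ε : ℝ) (hε : 0 < ε) :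
    ∃ K : ℝ, ∀ᶠ x in atTop, NB μ x K ≤ ENNReal.ofReal ε * PP μ x := by
  have h1' : (1:ℝ) - ε < 1 := by linarith
  have hev : ∀ᶠ K in atTop,
      1 - ε < liminf (fun x : ℝ => condPair μ {p | x - K < max p.1 p.2} x) atTop :=
    hJ.eventually (eventually_gt_nhds h1')
  obtain ⟨K, hK⟩ := hev.exists
  refine ⟨K, ?_⟩
  have hbdd : IsBoundedUnder (· ≥ ·) atTop (fun x : ℝ => condPair μ {p | x - K < max p.1 p.2} x) :=
    isBoundedUnder_of ⟨0, fun x => condPair_nonneg _ _ _⟩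
  have := eventually_lt_of_lt_liminf hK hbdd
  filter_upwards [this] with x hx
  have hpos : 0 < PP μ x := lt_of_lt_of_le (by
      have := hub x
      calc (0:ℝ≥0∞) < TT μ x := this
        _ ≤ PP μ x := TT_le_PP μ h1 x) le_rfl
  exact NB_le_of_condPair_gt μ hpos hx

/-! Chunk 3 : tail comparison machinery -/

lemma PP_eq_lint (μ : Measure ℝ) [SFinite μ] (x : ℝ) :
    PP μ x = ∫⁻ a, μ (Set.Ioi (x - a)) ∂μ := by
  rw [PP, Measure.prod_apply (mSS x)]
  refine lintegral_congr fun a => ?_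
  congr 1
  ext b
  simp only [mem_preimage, SS, mem_setOf_eq, mem_Ioi, sub_lt_iff_lt_add']

lemma measure_fst_gt (ρ : Measure ℝ) [IsProbabilityMeasure ρ] (a : ℝ) :
    (ρ.prod ρ) {p : ℝ × ℝ | a < p.1} = ρ (Set.Ioi a) := by
  have : {p : ℝ × ℝ | a < p.1} = Set.Ioi a ×ˢ (univ : Set ℝ) := by
    ext p; simp [mem_prod]
  rw [this, Measure.prod_prod, measure_univ, mul_one]

lemma measure_snd_gt (ρ : Measure ℝ) [IsProbabilityMeasure ρ] (a : ℝ) :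
    (ρ.prod ρ) {p : ℝ × ℝ | a < p.2} = ρ (Set.Ioi a) := by
  have : {p : ℝ × ℝ | a < p.2} = (univ : Set ℝ) ×ˢ Set.Ioi a := by
    ext p; simp [mem_prod]
  rw [this, Measure.prod_prod, measure_univ, one_mul]

lemma E1 (μ : Measure ℝ) [IsProbabilityMeasure μ] (hub : ∀ x : ℝ, 0 < μ (Set.Ioi x))
    (h1 : μ (Set.Ici 0) = 1) (hJ : MemJ μ) :
    ∃ K₀ : ℝ, ∀ᶠ x in atTop, PP μ x ≤ 4 * TT μ (x - K₀) := by
  obtain ⟨K₀, hK⟩ := Jsmall μ hub h1 hJ (1/2) (by norm_num)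
  refine ⟨K₀, ?_⟩
  filter_upwards [hK] with x hx
  have hsplit := split_SS μ x K₀
  have hA : (μ.prod μ) ({p : ℝ × ℝ | x - K₀ < max p.1 p.2} ∩ SS x) ≤ 2 * TT μ (x - K₀) := by
    have hsub : {p : ℝ × ℝ | x - K₀ < max p.1 p.2} ∩ SS x
        ⊆ {p : ℝ × ℝ | x - K₀ < p.1} ∪ {p : ℝ × ℝ | x - K₀ < p.2} := by
      rintro ⟨a, b⟩ ⟨hm, _⟩
      simp only [mem_setOf_eq, lt_max_iff] at hm
      rcases hm with h | h
      · exact Or.inl h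
      · exact Or.inr h
    calc (μ.prod μ) ({p : ℝ × ℝ | x - K₀ < max p.1 p.2} ∩ SS x)
        ≤ (μ.prod μ) ({p : ℝ × ℝ | x - K₀ < p.1} ∪ {p : ℝ × ℝ | x - K₀ < p.2}) :=
          measure_mono hsub
      _ ≤ (μ.prod μ) {p : ℝ × ℝ | x - K₀ < p.1} + (μ.prod μ) {p : ℝ × ℝ | x - K₀ < p.2} :=
          measure_union_le _ _
      _ = 2 * TT μ (x - K₀) := by
          rw [measure_fst_gt, measure_snd_gt, two_mul]; rfl
  -- convert to reals
  have hPfin := PP_ne_top μ x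
  have hTfin : TT μ (x - K₀) ≠ ⊤ := measure_ne_top μ _
  have hAfin : (μ.prod μ) ({p : ℝ × ℝ | x - K₀ < max p.1 p.2} ∩ SS x) ≠ ⊤ :=
    ne_top_of_le_ne_top hPfin (hsplit ▸ le_self_add)
  have hBfin : NB μ x K₀ ≠ ⊤ := ne_top_of_le_ne_top hPfin (hsplit ▸ le_add_self)
  have hp : (PP μ x).toReal =
      ((μ.prod μ) ({p : ℝ × ℝ | x - K₀ < max p.1 p.2} ∩ SS x)).toReal + (NB μ x K₀).toReal := by
    rw [← ENNReal.toReal_add hAfin hBfin, hsplit]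
  have hAR : ((μ.prod μ) ({p : ℝ × ℝ | x - K₀ < max p.1 p.2} ∩ SS x)).toReal
      ≤ 2 * (TT μ (x - K₀)).toReal := by
    have := ENNReal.toReal_mono (by finiteness) hA
    rwa [ENNReal.toReal_mul, ENNReal.toReal_ofNat] at this
  have hBR : (NB μ x K₀).toReal ≤ (1/2) * (PP μ x).toReal := by
    have := ENNReal.toReal_mono (by finiteness) hx
    rwa [ENNReal.toReal_mul, ENNReal.toReal_ofReal (by norm_num)] at this
  have hfinal : (PP μ x).toReal ≤ (4 * TT μ (x - K₀)).toReal := by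
    rw [ENNReal.toReal_mul, ENNReal.toReal_ofNat]
    nlinarith
  exact (ENNReal.toReal_le_toReal hPfin (by finiteness)).mp hfinal

lemma olong (μ : Measure ℝ) [IsProbabilityMeasure μ] (hub : ∀ x : ℝ, 0 < μ (Set.Ioi x))
    {K₀ : ℝ} (hE1 : ∀ᶠ x in atTop, PP μ x ≤ 4 * TT μ (x - K₀)) (a : ℝ) :
    ∃ C : ℝ≥0∞, C ≠ ⊤ ∧ ∀ᶠ x in atTop, TT μ (x - a) ≤ C * TT μ x := by
  have hB0 : TT μ (a + K₀) ≠ 0 := (hub _).ne'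
  have hBtop : TT μ (a + K₀) ≠ ⊤ := measure_ne_top μ _
  refine ⟨4 * (TT μ (a + K₀))⁻¹, ENNReal.mul_ne_top (by finiteness)
    (ENNReal.inv_ne_top.mpr hB0), ?_⟩
  have hshift : ∀ᶠ x in atTop, PP μ (x + K₀) ≤ 4 * TT μ x := by
    have := (tendsto_atTop_add_const_right atTop K₀ tendsto_id).eventually hE1
    simpa using this
  filter_upwards [hshift] with x hx
  have hincl : Set.Ioi (x - a) ×ˢ Set.Ioi (a + K₀) ⊆ SS (x + K₀) := by
    rintro ⟨u, v⟩ ⟨hu, hv⟩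
    simp only [mem_Ioi] at hu hv
    show x + K₀ < u + v
    linarith
  have hmul : TT μ (x - a) * TT μ (a + K₀) ≤ 4 * TT μ x :=
    calc TT μ (x - a) * TT μ (a + K₀)
        = (μ.prod μ) (Set.Ioi (x - a) ×ˢ Set.Ioi (a + K₀)) := (Measure.prod_prod _ _).symm
      _ ≤ PP μ (x + K₀) := measure_mono hincl
      _ ≤ 4 * TT μ x := hx
  calc TT μ (x - a) = TT μ (x - a) * TT μ (a + K₀) * (TT μ (a + K₀))⁻¹ := by
        rw [mul_assoc, ENNReal.mul_inv_cancel hB0 hBtop, mul_one]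
    _ ≤ 4 * TT μ x * (TT μ (a + K₀))⁻¹ := mul_le_mul_left hmul _
    _ = 4 * (TT μ (a + K₀))⁻¹ * TT μ x := by ring

lemma P2bound (μ : Measure ℝ) [IsProbabilityMeasure μ] (hub : ∀ x : ℝ, 0 < μ (Set.Ioi x))
    {K₀ : ℝ} (hE1 : ∀ᶠ x in atTop, PP μ x ≤ 4 * TT μ (x - K₀)) :
    ∃ C₂ : ℝ≥0∞, C₂ ≠ ⊤ ∧ ∀ᶠ x in atTop, PP μ x ≤ C₂ * TT μ x := by
  obtain ⟨C, hCt, hCev⟩ := olong μ hub hE1 K₀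
  refine ⟨4 * C, ENNReal.mul_ne_top (by finiteness) hCt, ?_⟩
  filter_upwards [hE1, hCev] with x h1 h2
  calc PP μ x ≤ 4 * TT μ (x - K₀) := h1
    _ ≤ 4 * (C * TT μ x) := mul_le_mul_right h2 _
    _ = 4 * C * TT μ x := by ring

lemma nconv_bound (μ : Measure ℝ) [IsProbabilityMeasure μ]
    {C₂ : ℝ≥0∞} (hC₂t : C₂ ≠ ⊤) (hC₂ : ∀ᶠ x in atTop, PP μ x ≤ C₂ * TT μ x)
    (holong : ∀ a : ℝ, ∃ C : ℝ≥0∞, C ≠ ⊤ ∧ ∀ᶠ x in atTop, TT μ (x - a) ≤ C * TT μ x) :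
    ∀ n : ℕ, ∃ C : ℝ≥0∞, C ≠ ⊤ ∧ ∀ᶠ x in atTop, nconv μ n (Set.Ioi x) ≤ C * TT μ x := by
  intro n
  induction n with
  | zero =>
    refine ⟨1, by finiteness, ?_⟩
    filter_upwards [eventually_ge_atTop (0:ℝ)] with x hx
    have : (Measure.dirac (0:ℝ)) (Set.Ioi x) = 0 := by
      rw [Measure.dirac_apply' _ measurableSet_Ioi]
      simp only [indicator_apply_eq_zero, mem_Ioi]
      intro h; linarith
    show (Measure.dirac (0:ℝ)) (Set.Ioi x) ≤ 1 * TT μ x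
    rw [this]; exact zero_le
  | succ n ih =>
    obtain ⟨C, hCt, hCev⟩ := ih
    obtain ⟨M, hM⟩ := eventually_atTop.mp hCev
    obtain ⟨CM, hCMt, hCMev⟩ := holong M
    refine ⟨C * C₂ + CM, by finiteness, ?_⟩
    filter_upwards [hC₂, hCMev] with x hx1 hx2
    have heq : nconv μ (n+1) (Set.Ioi x) = ∫⁻ a, nconv μ n (Set.Ioi (x - a)) ∂μ := by
      show conv (nconv μ n) μ (Set.Ioi x) = _
      rw [conv_comm, tail_conv]
    have hmeas : Measurable fun a => TT μ (x - a) :=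
      (measurable_TT μ).comp (measurable_const.sub measurable_id)
    have hb1 : ∫⁻ a in Set.Iic (x - M), nconv μ n (Set.Ioi (x - a)) ∂μ ≤ C * PP μ x := by
      calc ∫⁻ a in Set.Iic (x - M), nconv μ n (Set.Ioi (x - a)) ∂μ
          ≤ ∫⁻ a in Set.Iic (x - M), C * TT μ (x - a) ∂μ := by
            refine setLIntegral_mono (measurable_const.mul hmeas) fun a ha => ?_
            exact hM (x - a) (by simp only [mem_Iic] at ha; linarith)
        _ ≤ ∫⁻ a, C * TT μ (x - a) ∂μ := setLIntegral_le_lintegral _ _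
        _ = C * ∫⁻ a, TT μ (x - a) ∂μ := lintegral_const_mul C hmeas
        _ = C * PP μ x := by rw [PP_eq_lint]; rfl
    have hb2 : ∫⁻ a in (Set.Iic (x - M))ᶜ, nconv μ n (Set.Ioi (x - a)) ∂μ ≤ CM * TT μ x := by
      calc ∫⁻ a in (Set.Iic (x - M))ᶜ, nconv μ n (Set.Ioi (x - a)) ∂μ
          ≤ ∫⁻ _ in (Set.Iic (x - M))ᶜ, 1 ∂μ :=
            setLIntegral_mono measurable_const fun a _ => prob_le_one
        _ = μ (Set.Ioi (x - M)) := by rw [setLIntegral_one, compl_Iic]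
        _ ≤ CM * TT μ x := hx2
    calc nconv μ (n+1) (Set.Ioi x)
        = ∫⁻ a in Set.Iic (x - M), nconv μ n (Set.Ioi (x - a)) ∂μ
          + ∫⁻ a in (Set.Iic (x - M))ᶜ, nconv μ n (Set.Ioi (x - a)) ∂μ := by
          rw [heq, lintegral_add_compl _ measurableSet_Iic]
      _ ≤ C * PP μ x + CM * TT μ x := add_le_add hb1 hb2
      _ ≤ C * (C₂ * TT μ x) + CM * TT μ x := by
          exact add_le_add (mul_le_mul_right hx1 _) le_rfl
      _ = (C * C₂ + CM) * TT μ x := by ring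

/-! Chunk 4 : the key numerator bound for the convolution -/

lemma slice_prod (ρ₁ ρ₂ : Measure ℝ) [SFinite ρ₂] {s : Set ℝ} (hs : MeasurableSet s) (x : ℝ) :
    (ρ₁.prod ρ₂) {p : ℝ × ℝ | p.1 ∈ s ∧ x - p.1 < p.2} = ∫⁻ a in s, ρ₂ (Set.Ioi (x - a)) ∂ρ₁ := by
  have hmeas : MeasurableSet {p : ℝ × ℝ | p.1 ∈ s ∧ x - p.1 < p.2} := by
    rw [setOf_and]
    exact (measurable_fst hs).inter
      (measurableSet_lt (measurable_const.sub measurable_fst) measurable_snd)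
  rw [Measure.prod_apply hmeas, ← lintegral_indicator hs]
  refine lintegral_congr fun a => ?_
  by_cases ha : a ∈ s
  · rw [indicator_of_mem ha]
    congr 1
    ext b
    simp only [mem_preimage, mem_setOf_eq, ha, true_and, mem_Ioi]
  · rw [indicator_of_notMem ha]
    have : (Prod.mk a ⁻¹' {p : ℝ × ℝ | p.1 ∈ s ∧ x - p.1 < p.2}) = ∅ := by
      ext b
      simp only [mem_preimage, mem_setOf_eq, mem_empty_iff_false, iff_false, not_and]
      intro h; exact absurd h ha
    rw [this, measure_empty]

lemma Nnu_bound (μ : Measure ℝ) [IsProbabilityMeasure μ] (hub : ∀ x : ℝ, 0 < μ (Set.Ioi x))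
    (h1 : μ (Set.Ici 0) = 1) (hJ : MemJ μ) (n : ℕ) :
    ∃ E : ℝ≥0∞, E ≠ ⊤ ∧ ∀ ε : ℝ, 0 < ε → ∃ K : ℝ, ∀ᶠ x in atTop,
      NB (nconv μ n) x K ≤ E * ENNReal.ofReal ε * TT μ x := by
  obtain ⟨K₀, hE1⟩ := E1 μ hub h1 hJ
  obtain ⟨C₂, hC₂t, hC₂⟩ := P2bound μ hub hE1
  have holong := olong μ hub hE1
  obtain ⟨C, hCt, hCev'⟩ := nconv_bound μ hC₂t hC₂ holong n
  obtain ⟨M, hM⟩ := eventually_atTop.mp hCev'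
  set ν := nconv μ n with hν
  have hEfin : 2 * C ^ 2 * (2 * C₂ + 3) ≠ ⊤ :=
    ENNReal.mul_ne_top (ENNReal.mul_ne_top (by norm_num) (ENNReal.pow_ne_top hCt))
      (ENNReal.add_ne_top.mpr ⟨ENNReal.mul_ne_top (by norm_num) hC₂t, by norm_num⟩)
  refine ⟨2 * C ^ 2 * (2 * C₂ + 3), hEfin, ?_⟩
  intro ε hε
  obtain ⟨K', hK'⟩ := Jsmall μ hub h1 hJ ε hε
  obtain ⟨C', hC't, hC'ev⟩ := holong K'
  set η := ENNReal.ofReal ε / (C' + 1) with hηdef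
  have hη : 0 < η := ENNReal.div_pos (by simp [hε]) (by finiteness)
  have hηC' : η * C' ≤ ENNReal.ofReal ε := by
    calc η * C' ≤ η * (C' + 1) := mul_le_mul_right le_self_add _
      _ = ENNReal.ofReal ε := ENNReal.div_mul_cancel (by simp) (by finiteness)
  have hTtend : Tendsto (TT μ) atTop (nhds 0) := by
    have hI : ⋂ r : ℝ, Set.Ioi r = (∅ : Set ℝ) := by
      ext y
      simp only [mem_iInter, mem_Ioi, mem_empty_iff_false, iff_false]
      push_neg
      exact ⟨y, le_rfl⟩
    have := tendsto_measure_iInter_atTop (μ := μ) (s := fun r : ℝ => Set.Ioi r)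
      (fun _ => measurableSet_Ioi.nullMeasurableSet)
      (fun i j hij => Ioi_subset_Ioi hij) ⟨0, measure_ne_top μ _⟩
    rw [hI, measure_empty] at this
    exact this
  have hsm := hTtend (Iio_mem_nhds hη)
  obtain ⟨K₁, hK₁⟩ := eventually_atTop.mp hsm
  set K := max M K₁ with hKdef
  have hKM : M ≤ K := le_max_left _ _
  have hTK : TT μ K ≤ η := (hK₁ K (le_max_right _ _)).le
  have hhalf : ∀ᶠ x in atTop, TT μ (x / 2) < η :=
    (tendsto_id.atTop_div_const (by norm_num : (0:ℝ) < 2)).eventually hsm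
  refine ⟨K, ?_⟩
  filter_upwards [hK', hC₂, hC'ev, hhalf, eventually_ge_atTop (2 * M),
    eventually_ge_atTop (2 * K'), eventually_ge_atTop (2 * K)] with x hB1 hPB hC'x hh2 hx2M hx2K' hx2K
  -- basic measurable sets
  have mE₁ : MeasurableSet {p : ℝ × ℝ | p.2 ≤ p.1 ∧ p.1 ≤ x - K ∧ x < p.1 + p.2} := by
    rw [setOf_and, setOf_and]
    exact (measurableSet_le measurable_snd measurable_fst).inter
      ((measurableSet_le measurable_fst measurable_const).inter
        (measurableSet_lt measurable_const madd))
  set E₁ := {p : ℝ × ℝ | p.2 ≤ p.1 ∧ p.1 ≤ x - K ∧ x < p.1 + p.2} with hE₁def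
  -- Step 1: symmetrization
  have hsub0 : {p : ℝ × ℝ | max p.1 p.2 ≤ x - K} ∩ SS x ⊆ E₁ ∪ Prod.swap ⁻¹' E₁ := by
    rintro ⟨a, b⟩ ⟨hm, hs⟩
    simp only [mem_setOf_eq, max_le_iff] at hm
    have hs' : x < a + b := hs
    rcases le_total b a with h | h
    · exact Or.inl ⟨h, hm.1, hs'⟩
    · exact Or.inr ⟨h, hm.2, by simpa [add_comm] using hs'⟩
  have hswap : (ν.prod ν) (Prod.swap ⁻¹' E₁) = (ν.prod ν) E₁ := by
    rw [← Measure.map_apply measurable_swap mE₁, Measure.prod_swap]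
  have step3 : NB ν x K ≤ 2 * (ν.prod ν) E₁ := by
    calc NB ν x K ≤ (ν.prod ν) (E₁ ∪ Prod.swap ⁻¹' E₁) := measure_mono hsub0
      _ ≤ (ν.prod ν) E₁ + (ν.prod ν) (Prod.swap ⁻¹' E₁) := measure_union_le _ _
      _ = 2 * (ν.prod ν) E₁ := by rw [hswap, two_mul]
  -- Step 2: slice E₁
  have step4 : (ν.prod ν) E₁ = ∫⁻ a, ν {b : ℝ | b ≤ a ∧ a ≤ x - K ∧ x < a + b} ∂ν := by
    rw [Measure.prod_apply mE₁]
    exact lintegral_congr fun a => rfl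
  have hmeasν : Measurable fun a => ν (Set.Ioi (x - a)) :=
    (measurable_TT ν).comp (measurable_const.sub measurable_id)
  have step5 : ∀ a : ℝ, ν {b : ℝ | b ≤ a ∧ a ≤ x - K ∧ x < a + b}
      ≤ (Set.Ioc (x / 2) (x - K)).indicator (fun a => ν (Set.Ioi (x - a))) a := by
    intro a
    by_cases ha : a ∈ Set.Ioc (x / 2) (x - K)
    · rw [indicator_of_mem ha]
      refine measure_mono fun b hb => ?_
      simp only [mem_setOf_eq] at hb
      simp only [mem_Ioi]
      linarith [hb.2.2]
    · rw [indicator_of_notMem ha]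
      have hempty : {b : ℝ | b ≤ a ∧ a ≤ x - K ∧ x < a + b} = ∅ := by
        ext b
        simp only [mem_setOf_eq, mem_empty_iff_false, iff_false]
        rintro ⟨h1, h2, h3⟩
        apply ha
        refine ⟨?_, h2⟩
        by_contra hle
        push_neg at hle
        linarith
      rw [hempty, measure_empty]
  have step6 : (ν.prod ν) E₁ ≤ ∫⁻ a in Set.Ioc (x / 2) (x - K), ν (Set.Ioi (x - a)) ∂ν := by
    rw [step4, ← lintegral_indicator measurableSet_Ioc]
    exact lintegral_mono step5
  set J := ∫⁻ a in Set.Ioc (x / 2) (x - K), TT μ (x - a) ∂ν with hJdef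
  have hmeasT : Measurable fun a => TT μ (x - a) :=
    (measurable_TT μ).comp (measurable_const.sub measurable_id)
  have step7 : (∫⁻ a in Set.Ioc (x / 2) (x - K), ν (Set.Ioi (x - a)) ∂ν) ≤ C * J := by
    calc (∫⁻ a in Set.Ioc (x / 2) (x - K), ν (Set.Ioi (x - a)) ∂ν)
        ≤ ∫⁻ a in Set.Ioc (x / 2) (x - K), C * TT μ (x - a) ∂ν := by
          refine setLIntegral_mono (measurable_const.mul hmeasT) fun a ha => ?_
          exact hM (x - a) (by simp only [mem_Ioc] at ha; linarith [ha.2, hKM])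
      _ = C * J := lintegral_const_mul C hmeasT
  -- Step 3: rewrite J as a product measure and swap
  set W := {p : ℝ × ℝ | p.1 ∈ Set.Ioc (x / 2) (x - K) ∧ x - p.1 < p.2} with hWdef
  have mW : MeasurableSet W := by
    rw [hWdef, setOf_and]
    exact (measurable_fst measurableSet_Ioc).inter
      (measurableSet_lt (measurable_const.sub measurable_fst) measurable_snd)
  have step8 : J = (ν.prod μ) W := by
    rw [hJdef, hWdef, slice_prod ν μ measurableSet_Ioc x]
    rfl
  have step9 : (ν.prod μ) W = (μ.prod ν) (Prod.swap ⁻¹' W) := by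
    rw [← Measure.prod_swap, Measure.map_apply measurable_swap mW]
  have step10 : (μ.prod ν) (Prod.swap ⁻¹' W)
      = ∫⁻ w, ν {a : ℝ | a ∈ Set.Ioc (x / 2) (x - K) ∧ x - a < w} ∂μ := by
    rw [Measure.prod_apply (measurable_swap mW)]
    exact lintegral_congr fun w => rfl
  -- Step 4: pointwise slice bound
  have step11 : ∀ w : ℝ, ν {a : ℝ | a ∈ Set.Ioc (x / 2) (x - K) ∧ x - a < w}
      ≤ (Set.Ioc K (x / 2)).indicator (fun w => ν (Set.Ioi (x - w))) w
        + (Set.Ioi (x / 2)).indicator (fun _ => ν (Set.Ioi (x / 2))) w := by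
    intro w
    rcases le_or_gt w K with h | h
    · have hempty : {a : ℝ | a ∈ Set.Ioc (x / 2) (x - K) ∧ x - a < w} = ∅ := by
        ext a
        simp only [mem_setOf_eq, mem_Ioc, mem_empty_iff_false, iff_false]
        rintro ⟨⟨h1, h2⟩, h3⟩
        linarith
      rw [hempty, measure_empty]
      exact zero_le
    · rcases le_or_gt w (x / 2) with h2 | h2
      · have hle : ν {a : ℝ | a ∈ Set.Ioc (x / 2) (x - K) ∧ x - a < w}
            ≤ (Set.Ioc K (x / 2)).indicator (fun w => ν (Set.Ioi (x - w))) w := by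
          have hw : w ∈ Set.Ioc K (x / 2) := ⟨h, h2⟩
          rw [indicator_of_mem hw]
          refine measure_mono fun a ha => ?_
          simp only [mem_setOf_eq] at ha
          simp only [mem_Ioi]
          linarith [ha.2]
        exact hle.trans le_self_add
      · have hle : ν {a : ℝ | a ∈ Set.Ioc (x / 2) (x - K) ∧ x - a < w}
            ≤ (Set.Ioi (x / 2)).indicator (fun _ => ν (Set.Ioi (x / 2))) w := by
          have hw : w ∈ Set.Ioi (x / 2) := h2
          rw [indicator_of_mem hw]
          refine measure_mono fun a ha => ?_
          simp only [mem_setOf_eq, mem_Ioc] at ha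
          exact ha.1.1
        exact hle.trans le_add_self
  set I2 := ∫⁻ w in Set.Ioc K (x / 2), TT μ (x - w) ∂μ with hI2def
  have step12 : (∫⁻ w, ν {a : ℝ | a ∈ Set.Ioc (x / 2) (x - K) ∧ x - a < w} ∂μ)
      ≤ C * I2 + C * (TT μ (x / 2) * TT μ (x / 2)) := by
    have hind1meas : Measurable ((Set.Ioc K (x / 2)).indicator (fun w => ν (Set.Ioi (x - w)))) :=
      hmeasν.indicator measurableSet_Ioc
    calc (∫⁻ w, ν {a : ℝ | a ∈ Set.Ioc (x / 2) (x - K) ∧ x - a < w} ∂μ)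
        ≤ ∫⁻ w, ((Set.Ioc K (x / 2)).indicator (fun w => ν (Set.Ioi (x - w))) w
            + (Set.Ioi (x / 2)).indicator (fun _ => ν (Set.Ioi (x / 2))) w) ∂μ :=
          lintegral_mono step11
      _ = (∫⁻ w in Set.Ioc K (x / 2), ν (Set.Ioi (x - w)) ∂μ)
          + ν (Set.Ioi (x / 2)) * μ (Set.Ioi (x / 2)) := by
          rw [lintegral_add_left hind1meas, lintegral_indicator measurableSet_Ioc,
            lintegral_indicator measurableSet_Ioi, setLIntegral_const]
      _ ≤ (∫⁻ w in Set.Ioc K (x / 2), C * TT μ (x - w) ∂μ)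
          + (C * TT μ (x / 2)) * TT μ (x / 2) := by
          refine add_le_add ?_ ?_
          · refine setLIntegral_mono (measurable_const.mul hmeasT) fun w hw => ?_
            refine hM (x - w) ?_
            simp only [mem_Ioc] at hw
            have : x / 2 ≤ x - w := by linarith [hw.2]
            linarith
          · exact mul_le_mul_left (hM (x / 2) (by linarith)) _
      _ = C * I2 + C * (TT μ (x / 2) * TT μ (x / 2)) := by
          rw [lintegral_const_mul C hmeasT, hI2def, mul_assoc]
  -- Step 5: bound I2
  have hI2bound : I2 ≤ ENNReal.ofReal ε * (C₂ * TT μ x) + ENNReal.ofReal ε * TT μ x := by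
    have heq : I2 = (μ.prod μ) {p : ℝ × ℝ | p.1 ∈ Set.Ioc K (x / 2) ∧ x - p.1 < p.2} :=
      (slice_prod μ μ measurableSet_Ioc x).symm
    have hsubV : {p : ℝ × ℝ | p.1 ∈ Set.Ioc K (x / 2) ∧ x - p.1 < p.2}
        ⊆ ({p : ℝ × ℝ | max p.1 p.2 ≤ x - K'} ∩ SS x) ∪ Set.Ioi K ×ˢ Set.Ioi (x - K') := by
      rintro ⟨a, b⟩ ⟨ha, hb⟩
      simp only [mem_Ioc] at ha
      rcases le_or_gt b (x - K') with h | h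
      · refine Or.inl ⟨?_, ?_⟩
        · simp only [mem_setOf_eq, max_le_iff]
          exact ⟨by linarith [ha.2], h⟩
        · show x < a + b
          linarith
      · exact Or.inr ⟨by simpa using ha.1, by simpa using h⟩
    calc I2 ≤ NB μ x K' + (μ.prod μ) (Set.Ioi K ×ˢ Set.Ioi (x - K')) := by
          rw [heq]
          exact (measure_mono hsubV).trans (measure_union_le _ _)
      _ = NB μ x K' + TT μ K * TT μ (x - K') := by rw [Measure.prod_prod]; rfl
      _ ≤ ENNReal.ofReal ε * PP μ x + η * (C' * TT μ x) := by
          refine add_le_add hB1 ?_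
          exact mul_le_mul hTK hC'x (zero_le) (zero_le)
      _ ≤ ENNReal.ofReal ε * (C₂ * TT μ x) + ENNReal.ofReal ε * TT μ x := by
          refine add_le_add (mul_le_mul_right hPB _) ?_
          rw [← mul_assoc]
          exact mul_le_mul_left hηC' _
  -- Step 6: bound the square term
  have hSqbound : TT μ (x / 2) * TT μ (x / 2)
      ≤ ENNReal.ofReal ε * (C₂ * TT μ x) + 2 * (ENNReal.ofReal ε * TT μ x) := by
    have heq : TT μ (x / 2) * TT μ (x / 2)
        = (μ.prod μ) (Set.Ioi (x / 2) ×ˢ Set.Ioi (x / 2)) := (Measure.prod_prod _ _).symm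
    have hsubQ : Set.Ioi (x / 2) ×ˢ Set.Ioi (x / 2)
        ⊆ (({p : ℝ × ℝ | max p.1 p.2 ≤ x - K'} ∩ SS x)
          ∪ Set.Ioi (x / 2) ×ˢ Set.Ioi (x - K')) ∪ Set.Ioi (x - K') ×ˢ Set.Ioi (x / 2) := by
      rintro ⟨a, b⟩ ⟨ha, hb⟩
      simp only [mem_Ioi] at ha hb
      rcases le_or_gt b (x - K') with h | h
      · rcases le_or_gt a (x - K') with h' | h'
        · refine Or.inl (Or.inl ⟨?_, ?_⟩)
          · simp only [mem_setOf_eq, max_le_iff]; exact ⟨h', h⟩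
          · show x < a + b; linarith
        · exact Or.inr ⟨by simpa using h', by simpa using hb⟩
      · exact Or.inl (Or.inr ⟨by simpa using ha, by simpa using h⟩)
    have hcross : TT μ (x / 2) * TT μ (x - K') ≤ ENNReal.ofReal ε * TT μ x := by
      calc TT μ (x / 2) * TT μ (x - K') ≤ η * (C' * TT μ x) :=
            mul_le_mul hh2.le hC'x (zero_le) (zero_le)
        _ = (η * C') * TT μ x := by rw [mul_assoc]
        _ ≤ ENNReal.ofReal ε * TT μ x := mul_le_mul_left hηC' _
    calc TT μ (x / 2) * TT μ (x / 2)
        ≤ NB μ x K' + (μ.prod μ) (Set.Ioi (x / 2) ×ˢ Set.Ioi (x - K'))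
          + (μ.prod μ) (Set.Ioi (x - K') ×ˢ Set.Ioi (x / 2)) := by
          rw [heq]
          exact (measure_mono hsubQ).trans
            ((measure_union_le _ _).trans (add_le_add (measure_union_le _ _) le_rfl))
      _ = NB μ x K' + TT μ (x / 2) * TT μ (x - K') + TT μ (x - K') * TT μ (x / 2) := by
          rw [Measure.prod_prod, Measure.prod_prod]; rfl
      _ ≤ ENNReal.ofReal ε * (C₂ * TT μ x) + ENNReal.ofReal ε * TT μ x
          + ENNReal.ofReal ε * TT μ x := by
          refine add_le_add (add_le_add (hB1.trans (mul_le_mul_right hPB _)) hcross) ?_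
          rw [mul_comm]
          exact hcross
      _ = ENNReal.ofReal ε * (C₂ * TT μ x) + 2 * (ENNReal.ofReal ε * TT μ x) := by ring
  -- total
  calc NB ν x K ≤ 2 * (ν.prod ν) E₁ := step3
    _ ≤ 2 * (C * J) := mul_le_mul_right (step6.trans step7) _
    _ = 2 * (C * (∫⁻ w, ν {a : ℝ | a ∈ Set.Ioc (x / 2) (x - K) ∧ x - a < w} ∂μ)) := by
        rw [step8, step9, step10]
    _ ≤ 2 * (C * (C * I2 + C * (TT μ (x / 2) * TT μ (x / 2)))) :=
        mul_le_mul_right (mul_le_mul_right step12 _) _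
    _ ≤ 2 * (C * (C * (ENNReal.ofReal ε * (C₂ * TT μ x) + ENNReal.ofReal ε * TT μ x)
          + C * (ENNReal.ofReal ε * (C₂ * TT μ x) + 2 * (ENNReal.ofReal ε * TT μ x)))) := by
        exact mul_le_mul_right (mul_le_mul_right
          (add_le_add (mul_le_mul_right hI2bound _) (mul_le_mul_right hSqbound _)) _) _
    _ = 2 * C ^ 2 * (2 * C₂ + 3) * ENNReal.ofReal ε * TT μ x := by ring

/-! Chunk 5 : assembly -/

lemma memJ_nconv (μ : Measure ℝ) [IsProbabilityMeasure μ] (hub : ∀ x : ℝ, 0 < μ (Set.Ioi x))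
    (hnn : μ (Set.Iio 0) = 0) (h1 : μ (Set.Ici 0) = 1) (hJ : MemJ μ)
    {n : ℕ} (hn : 1 ≤ n) : MemJ (nconv μ n) := by
  set ν := nconv μ n with hνdef
  have hν1 : ν (Set.Ici 0) = 1 := nconv_Ici μ hnn n
  have hTle : ∀ x : ℝ, TT μ x ≤ ν (Set.Ioi x) := fun x => le_tail_nconv μ hnn hn x
  have hPPpos : ∀ x : ℝ, 0 < PP ν x := fun x =>
    lt_of_lt_of_le (hub x) ((hTle x).trans (TT_le_PP ν hν1 x))
  obtain ⟨E, hEt, hE⟩ := Nnu_bound μ hub h1 hJ n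
  set f := fun K : ℝ => liminf (fun x : ℝ => condPair ν {p | x - K < max p.1 p.2} x) atTop with hfdef
  have hmono : Monotone f := by
    intro K₁ K₂ hK
    refine liminf_le_liminf (Eventually.of_forall fun x => ?_)
      (isBoundedUnder_of ⟨0, fun x => condPair_nonneg ν _ x⟩)
      (isCoboundedUnder_ge_of_le atTop (fun x => condPair_le_one ν _ x))
    show condPair ν {p | x - K₁ < max p.1 p.2} x ≤ condPair ν {p | x - K₂ < max p.1 p.2} x
    unfold condPair
    have hD : (0:ℝ) ≤ ((ν.prod ν) {p : ℝ × ℝ | x < p.1 + p.2}).toReal := ENNReal.toReal_nonneg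
    have hnum : (((ν.prod ν) ({p : ℝ × ℝ | x - K₁ < max p.1 p.2} ∩ {p | x < p.1 + p.2}))).toReal
        ≤ (((ν.prod ν) ({p : ℝ × ℝ | x - K₂ < max p.1 p.2} ∩ {p | x < p.1 + p.2}))).toReal := by
      refine ENNReal.toReal_mono (measure_ne_top _ _) (measure_mono ?_)
      refine inter_subset_inter_left _ fun p hp => ?_
      simp only [mem_setOf_eq] at hp ⊢
      have : x - K₂ ≤ x - K₁ := by linarith
      linarith
    rcases eq_or_lt_of_le hD with h0 | h0
    · rw [← h0]; simp
    · exact (div_le_div_iff_of_pos_right h0).mpr hnum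
  have hle1 : ∀ K, f K ≤ 1 := fun K =>
    liminf_le_of_frequently_le (Frequently.of_forall fun x => condPair_le_one ν _ x)
      (isBoundedUnder_of ⟨0, fun x => condPair_nonneg ν _ x⟩)
  have hbig : ∀ δ : ℝ, 0 < δ → ∃ K, 1 - δ ≤ f K := by
    intro δ hδ
    have hEnn : (0:ℝ) ≤ E.toReal := ENNReal.toReal_nonneg
    have hd : (0:ℝ) < E.toReal + 1 := by linarith
    set ε := δ / (E.toReal + 1) with hεdef
    have hε : 0 < ε := by positivity
    obtain ⟨K, hK⟩ := hE ε hε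
    refine ⟨K, le_liminf_of_le (isCoboundedUnder_ge_of_le atTop
      (fun x => condPair_le_one ν _ x)) ?_⟩
    filter_upwards [hK] with x hx
    refine condPair_ge_of_NB_le ν hδ.le (hPPpos x) ?_
    have hkey : E * ENNReal.ofReal ε ≤ ENNReal.ofReal δ := by
      rw [← ENNReal.ofReal_toReal hEt, ← ENNReal.ofReal_mul ENNReal.toReal_nonneg]
      refine ENNReal.ofReal_le_ofReal ?_
      rw [hεdef, mul_div_assoc']
      rw [div_le_iff₀ hd]
      nlinarith
    calc NB ν x K ≤ E * ENNReal.ofReal ε * TT μ x := hx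
      _ ≤ ENNReal.ofReal δ * TT μ x := mul_le_mul_left hkey _
      _ ≤ ENNReal.ofReal δ * PP ν x :=
          mul_le_mul_right ((hTle x).trans (TT_le_PP ν hν1 x)) _
  show Tendsto f atTop (nhds 1)
  rw [Metric.tendsto_atTop]
  intro δ hδ
  obtain ⟨K₀', hK₀'⟩ := hbig (δ / 2) (by positivity)
  refine ⟨K₀', fun K hK => ?_⟩
  have ha : 1 - δ / 2 ≤ f K := le_trans hK₀' (hmono hK)
  have hb : f K ≤ 1 := hle1 K
  rw [Real.dist_eq, abs_of_nonpos (by linarith)]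
  linarith

lemma wte_nconv (μ : Measure ℝ) [IsProbabilityMeasure μ] (hub : ∀ x : ℝ, 0 < μ (Set.Ioi x))
    (hnn : μ (Set.Iio 0) = 0) (h1 : μ (Set.Ici 0) = 1) (hJ : MemJ μ)
    {n : ℕ} (hn : 1 ≤ n) : WeakTailEquiv μ (nconv μ n) := by
  obtain ⟨K₀, hE1⟩ := E1 μ hub h1 hJ
  obtain ⟨C₂, hC₂t, hC₂⟩ := P2bound μ hub hE1
  obtain ⟨C, hCt, hCev⟩ := nconv_bound μ hC₂t hC₂ (olong μ hub hE1) n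
  constructor
  · set R := max C.toReal 1 with hRdef
    have hR : (0:ℝ) < R := lt_of_lt_of_le one_pos (le_max_right _ _)
    refine ⟨R⁻¹, by positivity, ?_⟩
    filter_upwards [hCev] with x hx
    have hmain : tail (nconv μ n) x ≤ R * tail μ x := by
      have h := ENNReal.toReal_mono (ENNReal.mul_ne_top hCt (measure_ne_top μ _)) hx
      rw [ENNReal.toReal_mul] at h
      calc tail (nconv μ n) x ≤ C.toReal * tail μ x := h
        _ ≤ R * tail μ x :=
            mul_le_mul_of_nonneg_right (le_max_left _ _) ENNReal.toReal_nonneg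
    rw [inv_mul_le_iff₀ hR]
    exact hmain
  · refine ⟨1, Eventually.of_forall fun x => ?_⟩
    rw [one_mul]
    exact ENNReal.toReal_mono (measure_ne_top _ _) (le_tail_nconv μ hnn hn x)

theorem stmt11 (μ : Measure ℝ) [IsProbabilityMeasure μ]
    (hnn : μ (Set.Iio 0) = 0) (hub : ∀ x : ℝ, 0 < μ (Set.Ioi x))
    (hJ : MemJ μ) :
    ∀ n : ℕ, 1 ≤ n → WeakTailEquiv μ (nconv μ n) ∧ MemJ (nconv μ n) := by
  have h1 : μ (Set.Ici 0) = 1 := by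
    have h := prob_compl_eq_one_sub (μ := μ) (measurableSet_Iio (a := (0:ℝ)))
    rw [compl_Iio] at h
    rw [h, hnn]
    simp
  intro n hn
  exact ⟨wte_nconv μ hub hnn h1 hJ hn, memJ_nconv μ hub hnn h1 hJ hn⟩
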